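/- Let ψ : ℝ → ℝ be 2π-periodic, integrable, and continuous on (0,2π). For every compact K ⊂ (0,2π), sup_{t ∈ K} |(1/n)·(K_n' * ψ)(t)| → 0 as n → ∞, where K_n' is the derivative of the Fejér kernel and K_n' * ψ(t) := (1/(2π))∫_0^{2π} K_n'(x)ψ(t−x)dx. -/

import Mathlib

open Real Filter MeasureTheory intervalIntegral

noncomputable def fejer (n : ℕ) (x : ℝ) : ℝ :=
  (1 / n) * (Real.sin (n * x / 2) / Real.sin (x / 2)) ^ 2

namespace FejerAux

noncomputable def fg (n : ℕ) (x : ℝ) : ℝ :=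
  n * Real.cos (n * x / 2) * Real.sin (x / 2) - Real.sin (n * x / 2) * Real.cos (x / 2)

lemma hasDerivAt_fg (n : ℕ) (x : ℝ) :
    HasDerivAt (fg n) ((1 - (n : ℝ) ^ 2) / 2 * (Real.sin (x / 2) * Real.sin (n * x / 2))) x := by
  have h1 : HasDerivAt (fun y : ℝ => (n : ℝ) * y / 2) ((n : ℝ) / 2) x := by
    simpa using ((hasDerivAt_id x).const_mul (n : ℝ)).div_const 2
  have h2 : HasDerivAt (fun y : ℝ => y / 2) ((1 : ℝ) / 2) x := by
    simpa using (hasDerivAt_id x).div_const 2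
  have H := ((h1.cos.const_mul (n : ℝ)).mul h2.sin).sub (h1.sin.mul h2.cos)
  refine H.congr_deriv ?_
  ring

lemma fg_zero (n : ℕ) : fg n 0 = 0 := by simp [fg]

lemma fg_eq_integral (n : ℕ) (x : ℝ) :
    fg n x = ∫ t in (0:ℝ)..x, ((1 - (n : ℝ) ^ 2) / 2 * (Real.sin (t / 2) * Real.sin (n * t / 2))) := by
  have := intervalIntegral.integral_eq_sub_of_hasDerivAt
    (f := fg n) (a := 0) (b := x)
    (fun t _ => hasDerivAt_fg n t)
    (by apply Continuous.intervalIntegrable; fun_prop)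
  rw [this, fg_zero, sub_zero]

lemma abs_fg_le_cubic (n : ℕ) (hn : 1 ≤ n) {x : ℝ} (hx : 0 ≤ x) :
    |fg n x| ≤ (n : ℝ) ^ 3 * x ^ 3 / 24 := by
  have hn' : (1 : ℝ) ≤ (n : ℝ) := by exact_mod_cast hn
  rw [fg_eq_integral]
  have hb : ∫ t in (0:ℝ)..x, ((n : ℝ) ^ 3 / 8 * t ^ 2) = (n : ℝ) ^ 3 * x ^ 3 / 24 := by
    rw [intervalIntegral.integral_const_mul, integral_pow]
    ring
  calc ‖∫ t in (0:ℝ)..x, ((1 - (n : ℝ) ^ 2) / 2 * (Real.sin (t / 2) * Real.sin (n * t / 2)))‖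
      ≤ |∫ t in (0:ℝ)..x, ((n : ℝ) ^ 3 / 8 * t ^ 2)| := by
        apply intervalIntegral.norm_integral_le_abs_of_norm_le
        · rw [Set.uIoc_of_le hx]
          refine (ae_restrict_iff' measurableSet_Ioc).2 (ae_of_all _ fun t ht => ?_)
          have ht0 : 0 < t := ht.1
          have e1 : |Real.sin (t / 2)| ≤ t / 2 := by
            calc |Real.sin (t / 2)| ≤ |t / 2| := Real.abs_sin_le_abs
            _ = t / 2 := abs_of_nonneg (by linarith)
          have e2 : |Real.sin ((n : ℝ) * t / 2)| ≤ (n : ℝ) * t / 2 := by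
            calc |Real.sin ((n : ℝ) * t / 2)| ≤ |(n : ℝ) * t / 2| := Real.abs_sin_le_abs
            _ = (n : ℝ) * t / 2 := abs_of_nonneg (by positivity)
          have e3 : |(1 - (n : ℝ) ^ 2) / 2| ≤ (n : ℝ) ^ 2 / 2 := by
            rw [abs_div, abs_of_nonpos (by nlinarith : (1 - (n:ℝ)^2) ≤ 0)]
            rw [abs_of_nonneg (by norm_num : (0:ℝ) ≤ 2)]
            apply div_le_div_of_nonneg_right ?_ (by norm_num)
            linarith
          rw [Real.norm_eq_abs, abs_mul, abs_mul]
          have h4 : |Real.sin (t/2)| * |Real.sin ((n:ℝ)*t/2)| ≤ (t/2) * ((n:ℝ)*t/2) :=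
            mul_le_mul e1 e2 (abs_nonneg _) (by linarith)
          have h5 : |(1 - (n:ℝ)^2)/2| * (|Real.sin (t/2)| * |Real.sin ((n:ℝ)*t/2)|)
              ≤ ((n:ℝ)^2/2) * ((t/2) * ((n:ℝ)*t/2)) :=
            mul_le_mul e3 h4 (by positivity) (by positivity)
          refine h5.trans (le_of_eq (by ring))
        · apply Continuous.intervalIntegrable; fun_prop
    _ = (n : ℝ) ^ 3 * x ^ 3 / 24 := by rw [hb]; exact abs_of_nonneg (by positivity)

lemma abs_fg_le_quad (n : ℕ) (hn : 1 ≤ n) {x : ℝ} (hx : 0 ≤ x) :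
    |fg n x| ≤ (n : ℝ) ^ 2 * x ^ 2 / 8 := by
  have hn' : (1 : ℝ) ≤ (n : ℝ) := by exact_mod_cast hn
  rw [fg_eq_integral]
  have hb : ∫ t in (0:ℝ)..x, ((n : ℝ) ^ 2 / 4 * t) = (n : ℝ) ^ 2 * x ^ 2 / 8 := by
    rw [intervalIntegral.integral_const_mul, integral_id]
    ring
  calc ‖∫ t in (0:ℝ)..x, ((1 - (n : ℝ) ^ 2) / 2 * (Real.sin (t / 2) * Real.sin (n * t / 2)))‖
      ≤ |∫ t in (0:ℝ)..x, ((n : ℝ) ^ 2 / 4 * t)| := by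
        apply intervalIntegral.norm_integral_le_abs_of_norm_le
        · rw [Set.uIoc_of_le hx]
          refine (ae_restrict_iff' measurableSet_Ioc).2 (ae_of_all _ fun t ht => ?_)
          have ht0 : 0 < t := ht.1
          have e1 : |Real.sin (t / 2)| ≤ t / 2 := by
            calc |Real.sin (t / 2)| ≤ |t / 2| := Real.abs_sin_le_abs
            _ = t / 2 := abs_of_nonneg (by linarith)
          have e2 : |Real.sin ((n : ℝ) * t / 2)| ≤ 1 := Real.abs_sin_le_one _
          have e3 : |(1 - (n : ℝ) ^ 2) / 2| ≤ (n : ℝ) ^ 2 / 2 := by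
            rw [abs_div, abs_of_nonpos (by nlinarith : (1 - (n:ℝ)^2) ≤ 0)]
            rw [abs_of_nonneg (by norm_num : (0:ℝ) ≤ 2)]
            apply div_le_div_of_nonneg_right ?_ (by norm_num)
            linarith
          rw [Real.norm_eq_abs, abs_mul, abs_mul]
          have h4 : |Real.sin (t/2)| * |Real.sin ((n:ℝ)*t/2)| ≤ (t/2) * 1 :=
            mul_le_mul e1 e2 (abs_nonneg _) (by linarith)
          have h5 : |(1 - (n:ℝ)^2)/2| * (|Real.sin (t/2)| * |Real.sin ((n:ℝ)*t/2)|)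
              ≤ ((n:ℝ)^2/2) * ((t/2) * 1) :=
            mul_le_mul e3 h4 (by positivity) (by positivity)
          refine h5.trans (le_of_eq (by ring))
        · apply Continuous.intervalIntegrable; fun_prop
    _ = (n : ℝ) ^ 2 * x ^ 2 / 8 := by rw [hb]; exact abs_of_nonneg (by positivity)

lemma abs_fg_le_lin (n : ℕ) (x : ℝ) (hs : 0 ≤ Real.sin (x / 2)) :
    |fg n x| ≤ (n : ℝ) * Real.sin (x / 2) + 1 := by
  unfold fg
  calc |(n : ℝ) * Real.cos ((n:ℝ) * x / 2) * Real.sin (x / 2) - Real.sin ((n:ℝ) * x / 2) * Real.cos (x / 2)|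
      ≤ |(n : ℝ) * Real.cos ((n:ℝ) * x / 2) * Real.sin (x / 2)| + |Real.sin ((n:ℝ) * x / 2) * Real.cos (x / 2)| :=
        abs_sub _ _
    _ ≤ (n : ℝ) * Real.sin (x / 2) + 1 := by
        apply add_le_add
        · rw [abs_mul, abs_mul, abs_of_nonneg (by positivity : (0:ℝ) ≤ (n:ℝ)), abs_of_nonneg hs]
          have := Real.abs_cos_le_one ((n:ℝ) * x / 2)
          nlinarith [mul_le_mul_of_nonneg_right (mul_le_mul_of_nonneg_left this (Nat.cast_nonneg (α := ℝ) n)) hs]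
        · rw [abs_mul]
          exact mul_le_one₀ (Real.abs_sin_le_one _) (abs_nonneg _) (Real.abs_cos_le_one _)


lemma hasDerivAt_fejer (n : ℕ) (hn : 1 ≤ n) {x : ℝ} (hs : Real.sin (x / 2) ≠ 0) :
    HasDerivAt (fejer n)
      (Real.sin ((n : ℝ) * x / 2) * fg n x / ((n : ℝ) * Real.sin (x / 2) ^ 3)) x := by
  have hn0 : ((n : ℝ)) ≠ 0 := by
    have : (0:ℝ) < n := by exact_mod_cast hn
    exact ne_of_gt this
  have h1 : HasDerivAt (fun y : ℝ => (n : ℝ) * y / 2) ((n : ℝ) / 2) x := by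
    simpa using ((hasDerivAt_id x).const_mul (n : ℝ)).div_const 2
  have h2 : HasDerivAt (fun y : ℝ => y / 2) ((1 : ℝ) / 2) x := by
    simpa using (hasDerivAt_id x).div_const 2
  have hq := (h1.sin.div h2.sin hs)
  have H := (hq.pow 2).const_mul ((1 : ℝ) / n)
  refine H.congr_deriv ?_
  unfold fg
  simp only [Pi.div_apply]
  rw [div_pow]
  field_simp
  ring

lemma deriv_fejer (n : ℕ) (hn : 1 ≤ n) {x : ℝ} (hs : Real.sin (x / 2) ≠ 0) :
    deriv (fejer n) x
      = Real.sin ((n : ℝ) * x / 2) * fg n x / ((n : ℝ) * Real.sin (x / 2) ^ 3) :=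
  (hasDerivAt_fejer n hn hs).deriv

lemma fejer_symm (n : ℕ) (x : ℝ) : fejer n (2 * π - x) = fejer n x := by
  have h1 : Real.sin ((2 * π - x) / 2) = Real.sin (x / 2) := by
    rw [show (2 * π - x) / 2 = π - x / 2 by ring, Real.sin_pi_sub]
  have h2 : (Real.sin ((n : ℝ) * (2 * π - x) / 2)) ^ 2 = (Real.sin ((n : ℝ) * x / 2)) ^ 2 := by
    rw [show (n : ℝ) * (2 * π - x) / 2 = (n : ℝ) * π - (n : ℝ) * x / 2 by ring, Real.sin_sub,
      Real.sin_nat_mul_pi]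
    have hc := Real.sin_sq_add_cos_sq ((n : ℝ) * π)
    rw [Real.sin_nat_mul_pi] at hc
    nlinarith [hc]
  unfold fejer
  rw [div_pow, div_pow, h1, h2]

lemma sin_half_ne (x : ℝ) (h0 : 0 < x) (h2 : x < 2 * π) : Real.sin (x / 2) ≠ 0 := by
  have : 0 < Real.sin (x / 2) :=
    Real.sin_pos_of_pos_of_lt_pi (by linarith) (by linarith)
  exact ne_of_gt this

lemma deriv_fejer_symm (n : ℕ) (hn : 1 ≤ n) {x : ℝ} (h0 : 0 < x) (h2 : x < 2 * π) :
    deriv (fejer n) (2 * π - x) = - deriv (fejer n) x := by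
  have hs : Real.sin (x / 2) ≠ 0 := sin_half_ne x h0 h2
  have hs' : Real.sin ((2 * π - x) / 2) ≠ 0 := by
    rw [show (2 * π - x) / 2 = π - x / 2 by ring, Real.sin_pi_sub]; exact hs
  have H := hasDerivAt_fejer n hn hs'
  have hg : HasDerivAt (fun y : ℝ => 2 * π - y) (-1 : ℝ) x := by
    simpa using (hasDerivAt_id x).const_sub (2 * π)
  have H2 := H.comp x hg
  have heq : (fejer n ∘ HSub.hSub (2 * π)) = fejer n := funext fun y => fejer_symm n y
  rw [heq] at H2
  have d1 : deriv (fejer n) x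
      = Real.sin ((n : ℝ) * (2 * π - x) / 2) * fg n (2 * π - x)
        / ((n : ℝ) * Real.sin ((2 * π - x) / 2) ^ 3) * (-1) := H2.deriv
  have d2 := (hasDerivAt_fejer n hn hs').deriv
  rw [d1, d2]
  ring


lemma sin_half_lower {x : ℝ} (h0 : 0 < x) (hπ : x ≤ π) : x / π ≤ Real.sin (x / 2) := by
  have h := Real.mul_le_sin (x := x / 2) (by positivity) (by linarith)
  have e : 2 / π * (x / 2) = x / π := by ring
  linarith [e ▸ h]

lemma abs_deriv_fejer_le_A (n : ℕ) (hn : 1 ≤ n) {x : ℝ} (h0 : 0 < x) (hπ : x ≤ π) :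
    |deriv (fejer n) x| ≤ π ^ 3 * (n : ℝ) ^ 3 * x / 48 := by
  have hn' : (1:ℝ) ≤ (n:ℝ) := by exact_mod_cast hn
  have hn0 : (0:ℝ) < (n:ℝ) := by linarith
  have hsl : x / π ≤ Real.sin (x / 2) := sin_half_lower h0 hπ
  have hs0 : 0 < Real.sin (x / 2) := lt_of_lt_of_le (by positivity) hsl
  rw [deriv_fejer n hn (ne_of_gt hs0), abs_div, abs_mul,
    abs_of_pos (show (0:ℝ) < (n:ℝ) * Real.sin (x / 2) ^ 3 by positivity)]
  have eS : |Real.sin ((n:ℝ) * x / 2)| ≤ (n:ℝ) * x / 2 := by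
    calc |Real.sin ((n:ℝ) * x / 2)| ≤ |(n:ℝ) * x / 2| := Real.abs_sin_le_abs
    _ = (n:ℝ) * x / 2 := abs_of_nonneg (by positivity)
  have efg : |fg n x| ≤ (n:ℝ) ^ 3 * x ^ 3 / 24 := abs_fg_le_cubic n hn h0.le
  calc |Real.sin ((n:ℝ) * x / 2)| * |fg n x| / ((n:ℝ) * Real.sin (x / 2) ^ 3)
      ≤ (((n:ℝ) * x / 2) * ((n:ℝ) ^ 3 * x ^ 3 / 24)) / ((n:ℝ) * (x / π) ^ 3) := by
        apply div_le_div₀ (by positivity)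
          (mul_le_mul eS efg (abs_nonneg _) (by positivity)) (by positivity)
        gcongr
    _ = π ^ 3 * (n : ℝ) ^ 3 * x / 48 := by
        field_simp
        ring

lemma abs_deriv_fejer_le_B (n : ℕ) (hn : 1 ≤ n) {x : ℝ} (h0 : 0 < x) (hπ : x ≤ π) :
    |deriv (fejer n) x| ≤ π ^ 2 / x ^ 2 + π ^ 3 / ((n : ℝ) * x ^ 3) := by
  have hn' : (1:ℝ) ≤ (n:ℝ) := by exact_mod_cast hn
  have hn0 : (0:ℝ) < (n:ℝ) := by linarith
  have hsl : x / π ≤ Real.sin (x / 2) := sin_half_lower h0 hπ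
  have hs0 : 0 < Real.sin (x / 2) := lt_of_lt_of_le (by positivity) hsl
  have hxs : x ≤ π * Real.sin (x / 2) := by
    rw [div_le_iff₀ Real.pi_pos] at hsl
    linarith [hsl]
  rw [deriv_fejer n hn (ne_of_gt hs0), abs_div, abs_mul,
    abs_of_pos (show (0:ℝ) < (n:ℝ) * Real.sin (x / 2) ^ 3 by positivity)]
  set s := Real.sin (x / 2) with hsdef
  calc |Real.sin ((n:ℝ) * x / 2)| * |fg n x| / ((n:ℝ) * s ^ 3)
      ≤ (1 * ((n:ℝ) * s + 1)) / ((n:ℝ) * s ^ 3) := by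
        apply div_le_div₀ (by positivity)
          (mul_le_mul (Real.abs_sin_le_one _) (abs_fg_le_lin n x hs0.le) (abs_nonneg _)
            (by norm_num)) (by positivity) le_rfl
    _ = 1 / s ^ 2 + 1 / ((n:ℝ) * s ^ 3) := by
        field_simp
    _ ≤ π ^ 2 / x ^ 2 + π ^ 3 / ((n : ℝ) * x ^ 3) := by
        apply add_le_add
        · rw [div_le_div_iff₀ (by positivity) (by positivity)]
          nlinarith [mul_le_mul hxs hxs h0.le (by positivity : (0:ℝ) ≤ π * s)]
        · rw [div_le_div_iff₀ (by positivity) (by positivity)]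
          have hcube : x ^ 3 ≤ (π * s) ^ 3 := pow_le_pow_left₀ h0.le hxs 3
          nlinarith [mul_le_mul_of_nonneg_left hcube hn0.le]

lemma abs_deriv_fejer_global (n : ℕ) (hn : 1 ≤ n) {x : ℝ} (h0 : 0 < x) (h2 : x < 2 * π) :
    |deriv (fejer n) x| ≤ π ^ 4 * (n : ℝ) ^ 3 / 48 := by
  have hn' : (1:ℝ) ≤ (n:ℝ) := by exact_mod_cast hn
  have hlast : ∀ y : ℝ, 0 < y → y ≤ π →
      |deriv (fejer n) y| ≤ π ^ 4 * (n : ℝ) ^ 3 / 48 := by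
    intro y hy0 hyπ
    refine (abs_deriv_fejer_le_A n hn hy0 hyπ).trans ?_
    have := mul_le_mul_of_nonneg_left hyπ (show (0:ℝ) ≤ π ^ 3 * (n:ℝ) ^ 3 by positivity)
    nlinarith [this]
  rcases le_or_gt x π with hx | hx
  · exact hlast x h0 hx
  · have h0' : 0 < 2 * π - x := by linarith
    have hsym := deriv_fejer_symm n hn h0' (by linarith : 2 * π - x < 2 * π)
    rw [show 2 * π - (2 * π - x) = x by ring] at hsym
    rw [hsym, abs_neg]
    exact hlast _ h0' (by linarith)

lemma abs_deriv_fejer_le_mid (n : ℕ) (hn : 1 ≤ n) {η x : ℝ} (hη : 0 < η)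
    (h1 : η ≤ x) (h2 : x ≤ 2 * π - η) :
    |deriv (fejer n) x| ≤ π ^ 2 / η ^ 2 + π ^ 3 / η ^ 3 := by
  have hn' : (1:ℝ) ≤ (n:ℝ) := by exact_mod_cast hn
  have hn0 : (0:ℝ) < (n:ℝ) := by linarith
  have key : ∀ y : ℝ, η ≤ y → y ≤ π →
      |deriv (fejer n) y| ≤ π ^ 2 / η ^ 2 + π ^ 3 / η ^ 3 := by
    intro y hy1 hy2
    refine (abs_deriv_fejer_le_B n hn (lt_of_lt_of_le hη hy1) hy2).trans ?_
    apply add_le_add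
    · gcongr
    · apply div_le_div_of_nonneg_left (by positivity) (by positivity)
      nlinarith [pow_le_pow_left₀ hη.le hy1 3, mul_le_mul_of_nonneg_right hn' (pow_nonneg (hη.le.trans hy1) 3)]
  have hππ : η ≤ π := by nlinarith [Real.pi_pos]
  rcases le_or_gt x π with hx | hx
  · exact key x h1 hx
  · have h0' : 0 < 2 * π - x := by nlinarith [Real.pi_pos]
    have hsym := deriv_fejer_symm n hn h0' (by nlinarith [Real.pi_pos] : 2 * π - x < 2 * π)
    rw [show 2 * π - (2 * π - x) = x by ring] at hsym
    rw [hsym, abs_neg]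
    exact key _ (by linarith) (by linarith)


lemma ae_ne_real (c : ℝ) : ∀ᵐ x : ℝ ∂(volume : Measure ℝ), x ≠ c := by
  rw [ae_iff]
  have : {x : ℝ | ¬x ≠ c} = {c} := by ext y; simp
  rw [this]
  exact measure_singleton _

lemma intervalIntegrable_deriv_fejer (n : ℕ) (hn : 1 ≤ n) {a b : ℝ}
    (hab : Set.uIoc a b ⊆ Set.Ioc 0 (2 * π)) :
    IntervalIntegrable (deriv (fejer n)) volume a b := by
  rw [intervalIntegrable_iff]
  refine Measure.integrableOn_of_bounded (M := π ^ 4 * (n : ℝ) ^ 3 / 48)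
    (ne_of_lt (lt_of_le_of_lt (measure_mono hab)
      (measure_Ioc_lt_top (μ := (volume : Measure ℝ)) (a := 0) (b := 2 * π))))
    ((measurable_deriv _).aestronglyMeasurable) ?_
  filter_upwards [ae_restrict_mem measurableSet_uIoc,
    ae_restrict_of_ae (ae_ne_real (2 * π))] with x hx hx2
  have hmem := hab hx
  rw [Real.norm_eq_abs]
  exact abs_deriv_fejer_global n hn hmem.1 (lt_of_le_of_ne hmem.2 hx2)

lemma integral_abs_deriv_fejer_small (n : ℕ) (hn : 1 ≤ n) {c : ℝ} (h0 : 0 < c) (hc : c ≤ π) :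
    ∫ x in (0:ℝ)..c, |deriv (fejer n) x| ≤ π ^ 3 * (n : ℝ) ^ 3 * c ^ 2 / 96 := by
  have key : ‖∫ x in (0:ℝ)..c, |deriv (fejer n) x|‖
      ≤ |∫ x in (0:ℝ)..c, (π ^ 3 * (n : ℝ) ^ 3 / 48 * x)| := by
    apply intervalIntegral.norm_integral_le_abs_of_norm_le
    · rw [Set.uIoc_of_le h0.le]
      refine (ae_restrict_iff' measurableSet_Ioc).2 (ae_of_all _ fun x hx => ?_)
      rw [Real.norm_eq_abs, abs_abs]
      exact (abs_deriv_fejer_le_A n hn hx.1 (hx.2.trans hc)).trans (le_of_eq (by ring))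
    · apply Continuous.intervalIntegrable; fun_prop
  have e2 : |∫ x in (0:ℝ)..c, (π ^ 3 * (n : ℝ) ^ 3 / 48 * x)|
      = π ^ 3 * (n : ℝ) ^ 3 * c ^ 2 / 96 := by
    rw [intervalIntegral.integral_const_mul, integral_id,
      show (c ^ 2 - 0 ^ 2) / 2 = c ^ 2 / 2 by ring, abs_of_nonneg (by positivity)]
    ring
  calc ∫ x in (0:ℝ)..c, |deriv (fejer n) x| ≤ ‖∫ x in (0:ℝ)..c, |deriv (fejer n) x|‖ :=
        le_abs_self _
    _ ≤ _ := key
    _ = _ := e2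

lemma integral_bound_mid (n : ℕ) (hn : 1 ≤ n) {η : ℝ} (hη : 0 < η) (hle : 1 / (n:ℝ) ≤ η) :
    ∫ x in (1/(n:ℝ))..η, (π ^ 2 / x ^ 2 + π ^ 3 / ((n:ℝ) * x ^ 3))
      ≤ π ^ 2 * n + π ^ 3 * n / 2 := by
  have hn0 : (0:ℝ) < (n:ℝ) := by exact_mod_cast hn
  have hFTC : ∫ x in (1/(n:ℝ))..η, (π ^ 2 / x ^ 2 + π ^ 3 / ((n:ℝ) * x ^ 3))
      = (-π^2 * η⁻¹ + -π^3/(2*(n:ℝ)) * (η^2)⁻¹)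
        - (-π^2 * (1/(n:ℝ))⁻¹ + -π^3/(2*(n:ℝ)) * ((1/(n:ℝ))^2)⁻¹) := by
    apply intervalIntegral.integral_eq_sub_of_hasDerivAt
      (f := fun x => -π^2 * x⁻¹ + -π^3/(2*(n:ℝ)) * (x^2)⁻¹)
    · intro x hx
      rw [Set.uIcc_of_le hle] at hx
      have hx0 : 0 < x := lt_of_lt_of_le (by positivity) hx.1
      have d1 := (hasDerivAt_inv (ne_of_gt hx0)).const_mul (-π^2 : ℝ)
      have d2 := (((hasDerivAt_pow 2 x)).inv (pow_ne_zero 2 (ne_of_gt hx0))).const_mul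
        (-π^3/(2*(n:ℝ)) : ℝ)
      have := d1.add d2
      refine this.congr_deriv ?_
      field_simp
      ring
    · apply ContinuousOn.intervalIntegrable
      apply ContinuousOn.add
      · apply ContinuousOn.div continuousOn_const (by fun_prop)
        intro x hx
        rw [Set.uIcc_of_le hle] at hx
        have hx0 : 0 < x := lt_of_lt_of_le (by positivity) hx.1
        positivity
      · apply ContinuousOn.div continuousOn_const (by fun_prop)
        intro x hx
        rw [Set.uIcc_of_le hle] at hx
        have hx0 : 0 < x := lt_of_lt_of_le (by positivity) hx.1
        positivity
  rw [hFTC]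
  have e : -π^2 * (1/(n:ℝ))⁻¹ + -π^3/(2*(n:ℝ)) * ((1/(n:ℝ))^2)⁻¹
      = -(π^2 * n) - π^3 * n / 2 := by
    field_simp
    ring
  rw [e]
  have p1 : -π^2 * η⁻¹ ≤ 0 := by nlinarith [sq_nonneg π, inv_nonneg.2 hη.le]
  have p2 : -π^3/(2*(n:ℝ)) * (η^2)⁻¹ ≤ 0 := by
    apply mul_nonpos_of_nonpos_of_nonneg
    · apply div_nonpos_of_nonpos_of_nonneg
      · nlinarith [pow_pos Real.pi_pos 3]
      · positivity
    · positivity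
  linarith

lemma integral_abs_deriv_fejer_le (n : ℕ) (hn : 1 ≤ n) {η : ℝ} (hη : 0 < η) (hη1 : η ≤ 1) :
    ∫ x in (0:ℝ)..η, |deriv (fejer n) x| ≤ (π^3/96 + π^2 + π^3/2) * n := by
  have hn0 : (0:ℝ) < (n:ℝ) := by exact_mod_cast hn
  have hn' : (1:ℝ) ≤ (n:ℝ) := by exact_mod_cast hn
  have hηπ : η ≤ π := hη1.trans (by linarith [Real.pi_gt_three])
  have einv : (1/(n:ℝ))^2 * (n:ℝ)^3 = (n:ℝ) := by field_simp
  rcases le_total η (1/(n:ℝ)) with hc | hc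
  · refine (integral_abs_deriv_fejer_small n hn hη hηπ).trans ?_
    have h2 : η^2 ≤ (1/(n:ℝ))^2 := pow_le_pow_left₀ hη.le hc 2
    have h3 : π^3 * (n:ℝ)^3 * η^2 ≤ π^3 * (n:ℝ)^3 * (1/(n:ℝ))^2 :=
      mul_le_mul_of_nonneg_left h2 (by positivity)
    have h4 : π^3 * (n:ℝ)^3 * (1/(n:ℝ))^2 = π^3 * (n:ℝ) := by
      field_simp
    nlinarith [Real.pi_pos, pow_pos Real.pi_pos 3, pow_pos Real.pi_pos 2]
  · have hi1 : IntervalIntegrable (fun x => |deriv (fejer n) x|) volume 0 (1/(n:ℝ)) := by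
      apply (intervalIntegrable_deriv_fejer n hn ?_).abs
      rw [Set.uIoc_of_le (by positivity : (0:ℝ) ≤ 1/(n:ℝ))]
      apply Set.Ioc_subset_Ioc_right
      linarith [Real.pi_gt_three, hη1, hc]
    have hi2 : IntervalIntegrable (fun x => |deriv (fejer n) x|) volume (1/(n:ℝ)) η := by
      apply (intervalIntegrable_deriv_fejer n hn ?_).abs
      rw [Set.uIoc_of_le hc]
      intro x hx
      exact ⟨lt_of_le_of_lt (by positivity) hx.1, le_trans hx.2 (by linarith [Real.pi_gt_three])⟩
    have hsplit := intervalIntegral.integral_add_adjacent_intervals hi1 hi2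
    have b1 : ∫ x in (0:ℝ)..(1/(n:ℝ)), |deriv (fejer n) x| ≤ π^3 * (n:ℝ) / 96 := by
      refine (integral_abs_deriv_fejer_small n hn (by positivity)
        (le_trans (by simpa using (div_le_one hn0).2 hn') (by linarith [Real.pi_gt_three]))).trans ?_
      rw [show π^3 * (n:ℝ)^3 * (1/(n:ℝ))^2/96 = π^3 * ((1/(n:ℝ))^2 * (n:ℝ)^3)/96 by ring, einv]
    have b2 : ∫ x in (1/(n:ℝ))..η, |deriv (fejer n) x| ≤ π^2 * n + π^3 * n / 2 := by
      have key : ‖∫ x in (1/(n:ℝ))..η, |deriv (fejer n) x|‖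
          ≤ |∫ x in (1/(n:ℝ))..η, (π^2/x^2 + π^3/((n:ℝ)*x^3))| := by
        apply intervalIntegral.norm_integral_le_abs_of_norm_le
        · rw [Set.uIoc_of_le hc]
          refine (ae_restrict_iff' measurableSet_Ioc).2 (ae_of_all _ fun x hx => ?_)
          rw [Real.norm_eq_abs, abs_abs]
          exact abs_deriv_fejer_le_B n hn (lt_of_le_of_lt (by positivity) hx.1)
            (hx.2.trans hηπ)
        · apply ContinuousOn.intervalIntegrable
          apply ContinuousOn.add
          · apply ContinuousOn.div continuousOn_const (by fun_prop)
            intro x hx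
            rw [Set.uIcc_of_le hc] at hx
            have hx0 : 0 < x := lt_of_lt_of_le (by positivity) hx.1
            positivity
          · apply ContinuousOn.div continuousOn_const (by fun_prop)
            intro x hx
            rw [Set.uIcc_of_le hc] at hx
            have hx0 : 0 < x := lt_of_lt_of_le (by positivity) hx.1
            positivity
      have habs : |∫ x in (1/(n:ℝ))..η, (π^2/x^2 + π^3/((n:ℝ)*x^3))|
          ≤ π^2 * n + π^3 * n / 2 := by
        rw [abs_of_nonneg]
        · exact integral_bound_mid n hn hη hc
        · apply intervalIntegral.integral_nonneg hc
          intro x hx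
          have hx0 : 0 < x := lt_of_lt_of_le (by positivity) hx.1
          positivity
      calc ∫ x in (1/(n:ℝ))..η, |deriv (fejer n) x|
          ≤ ‖∫ x in (1/(n:ℝ))..η, |deriv (fejer n) x|‖ := le_abs_self _
        _ ≤ _ := key
        _ ≤ _ := habs
    rw [← hsplit]
    nlinarith [b1, b2]


end FejerAux

open FejerAux

set_option maxHeartbeats 2000000 in
theorem fejer_deriv_convolution_small (ψ : ℝ → ℝ)
    (hper : ∀ t : ℝ, ψ (t + 2 * π) = ψ t)
    (hint : IntervalIntegrable ψ MeasureTheory.volume 0 (2 * π))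
    (hcont : ContinuousOn ψ (Set.Ioo 0 (2 * π)))
    (K : Set ℝ) (hK : IsCompact K) (hKsub : K ⊆ Set.Ioo 0 (2 * π)) :
    TendstoUniformlyOn
      (fun n : ℕ => fun t : ℝ =>
        (1 / n) * ((1 / (2 * π)) * ∫ x in (0:ℝ)..(2 * π), deriv (fejer n) x * ψ (t - x)))
      (fun _ => 0) atTop K := by
  rcases Set.eq_empty_or_nonempty K with rfl | hKne
  · exact tendstoUniformlyOn_empty
  have hπ := Real.pi_pos
  have hπ3 := Real.pi_gt_three
  set a := sInf K with ha
  set b := sSup K with hb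
  have haK : a ∈ K := hK.sInf_mem hKne
  have hbK : b ∈ K := hK.sSup_mem hKne
  obtain ⟨ha0, ha2⟩ := hKsub haK
  obtain ⟨hb0, hb2⟩ := hKsub hbK
  set L : Set ℝ := Set.Icc (a/2) ((b + 2*π)/2) with hL
  have hLsub : L ⊆ Set.Ioo 0 (2*π) := fun x hx =>
    ⟨lt_of_lt_of_le (by linarith) hx.1, lt_of_le_of_lt hx.2 (by linarith)⟩
  have hUC : UniformContinuousOn ψ L :=
    (isCompact_Icc).uniformContinuousOn_of_continuous (hcont.mono hLsub)
  rw [Metric.tendstoUniformlyOn_iff]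
  intro ε hε
  set C₀ : ℝ := π^3/96 + π^2 + π^3/2 with hC₀
  have hC₀pos : 0 < C₀ := by positivity
  set ε' : ℝ := ε * π / (4 * C₀) with hε'def
  have hε' : 0 < ε' := by positivity
  obtain ⟨δ, hδ0, hδ⟩ := Metric.uniformContinuousOn_iff.1 hUC ε' hε'
  set η : ℝ := min (min (a/2) ((2*π - b)/2)) (min (δ/2) 1) with hηdef
  have hη0 : 0 < η :=
    lt_min (lt_min (by linarith) (by linarith)) (lt_min (by linarith) one_pos)
  have hηa : η ≤ a/2 := (min_le_left _ _).trans (min_le_left _ _)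
  have hηb : η ≤ (2*π - b)/2 := (min_le_left _ _).trans (min_le_right _ _)
  have hηδ : η < δ := lt_of_le_of_lt ((min_le_right _ _).trans (min_le_left _ _)) (by linarith)
  have hη1 : η ≤ 1 := (min_le_right _ _).trans (min_le_right _ _)
  have hηπ : η ≤ π := hη1.trans (by linarith)
  set Rη : ℝ := π^2/η^2 + π^3/η^3 with hRη
  have hRηpos : 0 < Rη := by positivity
  set Mψ : ℝ := ∫ x in (0:ℝ)..(2*π), |ψ x| with hMψdef
  have hMψ : 0 ≤ Mψ := intervalIntegral.integral_nonneg (by linarith) (fun x _ => abs_nonneg _)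
  have hlim : Tendsto (fun n : ℕ => (Rη * Mψ / (2*π)) / n) atTop (nhds 0) :=
    tendsto_const_div_atTop_nhds_zero_nat _
  filter_upwards [hlim.eventually_lt_const (half_pos hε), eventually_ge_atTop 1]
    with n hmid hn1
  intro t ht
  have hat : a ≤ t := csInf_le hK.bddBelow ht
  have htb : t ≤ b := le_csSup hK.bddAbove ht
  have htL : t ∈ L := ⟨by linarith, by linarith⟩
  have hn' : (1:ℝ) ≤ (n:ℝ) := by exact_mod_cast hn1
  have hn0 : (0:ℝ) < (n:ℝ) := by linarith
  -- integrability of the translate of ψ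
  have hψshift : IntervalIntegrable (fun x => ψ (t - x)) volume 0 (2*π) := by
    have h1 : IntervalIntegrable ψ volume 0 t := by
      apply hint.mono_set
      rw [Set.uIcc_of_le (by linarith : (0:ℝ) ≤ t), Set.uIcc_of_le (by linarith : (0:ℝ) ≤ 2*π)]
      exact Set.Icc_subset_Icc_right (by linarith)
    have h2'' : IntervalIntegrable ψ volume t (2*π) := by
      apply hint.mono_set
      rw [Set.uIcc_of_le (by linarith : t ≤ 2*π), Set.uIcc_of_le (by linarith : (0:ℝ) ≤ 2*π)]
      exact Set.Icc_subset_Icc_left (by linarith)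
    have h2 := h2''.comp_add_right (2*π)
    have heq : (fun x => ψ (x + 2*π)) = ψ := funext hper
    rw [heq] at h2
    have h2' : IntervalIntegrable ψ volume (t - 2*π) 0 := by
      convert h2 using 2
      ring
    have h3 : IntervalIntegrable ψ volume (t - 2*π) t := h2'.trans h1
    have h4 := h3.symm.comp_sub_left t
    have e1 : t - t = 0 := by ring
    have e2 : t - (t - 2*π) = 2*π := by ring
    rw [e1, e2] at h4
    exact h4
  have hbd : ∀ᵐ x ∂(volume.restrict (Set.uIoc (0:ℝ) (2*π))),
      ‖deriv (fejer n) x‖ ≤ π^4*(n:ℝ)^3/48 := by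
    rw [Set.uIoc_of_le (by linarith : (0:ℝ) ≤ 2*π)]
    filter_upwards [ae_restrict_mem measurableSet_Ioc,
      ae_restrict_of_ae (ae_ne_real (2*π))] with x hx hx2
    rw [Real.norm_eq_abs]
    exact abs_deriv_fejer_global n hn1 hx.1 (lt_of_le_of_ne hx.2 hx2)
  have hprod : IntervalIntegrable (fun x => deriv (fejer n) x * ψ (t - x)) volume 0 (2*π) := by
    rw [intervalIntegrable_iff] at hψshift ⊢
    exact hψshift.bdd_mul (measurable_deriv _).aestronglyMeasurable hbd
  have hord1 : (0:ℝ) ≤ η := hη0.le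
  have hord2 : η ≤ 2*π - η := by linarith
  have hord3 : 2*π - η ≤ 2*π := by linarith
  have hsub1 : Set.uIcc (0:ℝ) η ⊆ Set.uIcc (0:ℝ) (2*π) := by
    rw [Set.uIcc_of_le hord1, Set.uIcc_of_le (by linarith : (0:ℝ) ≤ 2*π)]
    exact Set.Icc_subset_Icc_right (by linarith)
  have hsub2 : Set.uIcc η (2*π - η) ⊆ Set.uIcc (0:ℝ) (2*π) := by
    rw [Set.uIcc_of_le hord2, Set.uIcc_of_le (by linarith : (0:ℝ) ≤ 2*π)]
    exact Set.Icc_subset_Icc (by linarith) (by linarith)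
  have hsub3 : Set.uIcc (2*π - η) (2*π) ⊆ Set.uIcc (0:ℝ) (2*π) := by
    rw [Set.uIcc_of_le hord3, Set.uIcc_of_le (by linarith : (0:ℝ) ≤ 2*π)]
    exact Set.Icc_subset_Icc (by linarith) le_rfl
  have hint1 := hprod.mono_set hsub1
  have hint2 := hprod.mono_set hsub2
  have hint3 := hprod.mono_set hsub3
  have hD1 : IntervalIntegrable (deriv (fejer n)) volume 0 η := by
    apply intervalIntegrable_deriv_fejer n hn1
    rw [Set.uIoc_of_le hord1]
    exact Set.Ioc_subset_Ioc_right (by linarith)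
  have hD3 : IntervalIntegrable (deriv (fejer n)) volume (2*π - η) (2*π) := by
    apply intervalIntegrable_deriv_fejer n hn1
    rw [Set.uIoc_of_le hord3]
    exact Set.Ioc_subset_Ioc_left (by linarith)
  have hsplit : (∫ x in (0:ℝ)..(2*π), deriv (fejer n) x * ψ (t - x))
      = (∫ x in (0:ℝ)..η, deriv (fejer n) x * ψ (t - x))
        + (∫ x in η..(2*π - η), deriv (fejer n) x * ψ (t - x))
        + (∫ x in (2*π - η)..(2*π), deriv (fejer n) x * ψ (t - x)) := by
    have e1 := intervalIntegral.integral_add_adjacent_intervals hint1 (hint2.trans hint3)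
    have e2 := intervalIntegral.integral_add_adjacent_intervals hint2 hint3
    linarith
  -- decompose pieces 1 and 3
  have hP1eq : (∫ x in (0:ℝ)..η, deriv (fejer n) x * ψ (t - x))
      = (∫ x in (0:ℝ)..η, deriv (fejer n) x * (ψ (t - x) - ψ t))
        + (∫ x in (0:ℝ)..η, deriv (fejer n) x) * ψ t := by
    have h1 : (∫ x in (0:ℝ)..η, deriv (fejer n) x * (ψ (t - x) - ψ t))
        = ∫ x in (0:ℝ)..η, (deriv (fejer n) x * ψ (t - x) - deriv (fejer n) x * ψ t) :=
      intervalIntegral.integral_congr (fun x _ => by ring)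
    have h2 := intervalIntegral.integral_sub hint1 (hD1.mul_const (ψ t))
    have h3 : (∫ x in (0:ℝ)..η, deriv (fejer n) x * ψ t)
        = (∫ x in (0:ℝ)..η, deriv (fejer n) x) * ψ t :=
      intervalIntegral.integral_mul_const _ _
    rw [h1, h2, h3]
    ring
  have hP3eq : (∫ x in (2*π - η)..(2*π), deriv (fejer n) x * ψ (t - x))
      = (∫ x in (2*π - η)..(2*π), deriv (fejer n) x * (ψ (t - x) - ψ t))
        + (∫ x in (2*π - η)..(2*π), deriv (fejer n) x) * ψ t := by
    have h1 : (∫ x in (2*π - η)..(2*π), deriv (fejer n) x * (ψ (t - x) - ψ t))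
        = ∫ x in (2*π - η)..(2*π), (deriv (fejer n) x * ψ (t - x) - deriv (fejer n) x * ψ t) :=
      intervalIntegral.integral_congr (fun x _ => by ring)
    have h2 := intervalIntegral.integral_sub hint3 (hD3.mul_const (ψ t))
    have h3 : (∫ x in (2*π - η)..(2*π), deriv (fejer n) x * ψ t)
        = (∫ x in (2*π - η)..(2*π), deriv (fejer n) x) * ψ t :=
      intervalIntegral.integral_mul_const _ _
    rw [h1, h2, h3]
    ring
  have hzero : (∫ x in (0:ℝ)..η, deriv (fejer n) x)
      + (∫ x in (2*π - η)..(2*π), deriv (fejer n) x) = 0 := by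
    have e := intervalIntegral.integral_comp_sub_left (a := 0) (b := η) (deriv (fejer n)) (2*π)
    rw [sub_zero] at e
    have e2 : (∫ x in (0:ℝ)..η, deriv (fejer n) (2*π - x))
        = ∫ x in (0:ℝ)..η, (- deriv (fejer n) x) := by
      apply intervalIntegral.integral_congr_ae
      refine ae_of_all _ fun x hx => ?_
      rw [Set.uIoc_of_le hord1] at hx
      exact deriv_fejer_symm n hn1 hx.1 (by linarith [hx.2])
    rw [← e, e2, intervalIntegral.integral_neg]
    ring
  -- key integral bound near 0 and by symmetry near 2π
  have hID1 : (∫ x in (0:ℝ)..η, |deriv (fejer n) x|) ≤ C₀ * n :=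
    integral_abs_deriv_fejer_le n hn1 hη0 hη1
  have hID3 : (∫ x in (2*π - η)..(2*π), |deriv (fejer n) x|)
      = ∫ x in (0:ℝ)..η, |deriv (fejer n) x| := by
    have e := intervalIntegral.integral_comp_sub_left (a := 0) (b := η)
      (fun x => |deriv (fejer n) x|) (2*π)
    rw [sub_zero] at e
    rw [← e]
    apply intervalIntegral.integral_congr_ae
    refine ae_of_all _ fun x hx => ?_
    rw [Set.uIoc_of_le hord1] at hx
    rw [deriv_fejer_symm n hn1 hx.1 (by linarith [hx.2]), abs_neg]
  -- estimate piece 1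
  have hP1 : |∫ x in (0:ℝ)..η, deriv (fejer n) x * (ψ (t - x) - ψ t)| ≤ ε' * (C₀ * n) := by
    have key : ‖∫ x in (0:ℝ)..η, deriv (fejer n) x * (ψ (t - x) - ψ t)‖
        ≤ abs (∫ x in (0:ℝ)..η, ε' * |deriv (fejer n) x|) := by
      apply intervalIntegral.norm_integral_le_abs_of_norm_le
      · rw [Set.uIoc_of_le hord1]
        refine (ae_restrict_iff' measurableSet_Ioc).2 (ae_of_all _ fun x hx => ?_)
        have hx0 := hx.1
        have hxη := hx.2
        have hmemL : t - x ∈ L := ⟨by linarith, by linarith⟩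
        have hdist : dist (t - x) t < δ := by
          rw [Real.dist_eq, show t - x - t = -x by ring, abs_neg, abs_of_pos hx0]
          linarith
        have hψsmall : |ψ (t - x) - ψ t| ≤ ε' := by
          have := hδ (t - x) hmemL t htL hdist
          rw [Real.dist_eq] at this
          exact this.le
        rw [Real.norm_eq_abs, abs_mul]
        calc |deriv (fejer n) x| * |ψ (t - x) - ψ t| ≤ |deriv (fejer n) x| * ε' :=
              mul_le_mul_of_nonneg_left hψsmall (abs_nonneg _)
          _ = ε' * |deriv (fejer n) x| := by ring
      · exact (hD1.abs.const_mul ε')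
    rw [intervalIntegral.integral_const_mul, abs_mul, abs_of_pos hε', Real.norm_eq_abs] at key
    refine key.trans ?_
    apply mul_le_mul_of_nonneg_left ?_ hε'.le
    calc abs (∫ x in (0:ℝ)..η, |deriv (fejer n) x|) = ∫ x in (0:ℝ)..η, |deriv (fejer n) x| :=
          abs_of_nonneg (intervalIntegral.integral_nonneg hord1 fun x _ => abs_nonneg _)
      _ ≤ C₀ * n := hID1
  -- estimate piece 3
  have hP3 : |∫ x in (2*π - η)..(2*π), deriv (fejer n) x * (ψ (t - x) - ψ t)| ≤ ε' * (C₀ * n) := by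
    have key : ‖∫ x in (2*π - η)..(2*π), deriv (fejer n) x * (ψ (t - x) - ψ t)‖
        ≤ abs (∫ x in (2*π - η)..(2*π), ε' * |deriv (fejer n) x|) := by
      apply intervalIntegral.norm_integral_le_abs_of_norm_le
      · rw [Set.uIoc_of_le hord3]
        refine (ae_restrict_iff' measurableSet_Ioc).2 (ae_of_all _ fun x hx => ?_)
        have hx0 := hx.1
        have hxη := hx.2
        have hu : ψ (t - x) = ψ (t - x + 2*π) := (hper (t - x)).symm
        have hmemL : t - x + 2*π ∈ L := ⟨by linarith, by linarith⟩
        have hdist : dist (t - x + 2*π) t < δ := by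
          rw [Real.dist_eq, show t - x + 2*π - t = 2*π - x by ring,
            abs_of_nonneg (by linarith : (0:ℝ) ≤ 2*π - x)]
          linarith
        have hψsmall : |ψ (t - x) - ψ t| ≤ ε' := by
          rw [hu]
          have := hδ (t - x + 2*π) hmemL t htL hdist
          rw [Real.dist_eq] at this
          exact this.le
        rw [Real.norm_eq_abs, abs_mul]
        calc |deriv (fejer n) x| * |ψ (t - x) - ψ t| ≤ |deriv (fejer n) x| * ε' :=
              mul_le_mul_of_nonneg_left hψsmall (abs_nonneg _)
          _ = ε' * |deriv (fejer n) x| := by ring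
      · exact (hD3.abs.const_mul ε')
    rw [intervalIntegral.integral_const_mul, abs_mul, abs_of_pos hε', Real.norm_eq_abs] at key
    refine key.trans ?_
    apply mul_le_mul_of_nonneg_left ?_ hε'.le
    calc abs (∫ x in (2*π - η)..(2*π), |deriv (fejer n) x|)
        = ∫ x in (2*π - η)..(2*π), |deriv (fejer n) x| :=
          abs_of_nonneg (intervalIntegral.integral_nonneg hord3 fun x _ => abs_nonneg _)
      _ = ∫ x in (0:ℝ)..η, |deriv (fejer n) x| := hID3
      _ ≤ C₀ * n := hID1
  -- translate identity for Mψ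
  have htrans : (∫ x in (0:ℝ)..(2*π), |ψ (t - x)|) = Mψ := by
    rw [intervalIntegral.integral_comp_sub_left (fun u => |ψ u|) t]
    have hperabs : Function.Periodic (fun u => |ψ u|) (2*π) := fun u => by
      simp only []
      rw [hper u]
    have e := hperabs.intervalIntegral_add_eq (t - 2*π) 0
    rw [sub_zero]
    simpa using e
  -- estimate middle piece
  have hψabs : IntervalIntegrable (fun x => |ψ (t - x)|) volume 0 (2*π) := hψshift.abs
  have hP2 : |∫ x in η..(2*π - η), deriv (fejer n) x * ψ (t - x)| ≤ Rη * Mψ := by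
    have key : ‖∫ x in η..(2*π - η), deriv (fejer n) x * ψ (t - x)‖
        ≤ abs (∫ x in η..(2*π - η), Rη * |ψ (t - x)|) := by
      apply intervalIntegral.norm_integral_le_abs_of_norm_le
      · rw [Set.uIoc_of_le hord2]
        refine (ae_restrict_iff' measurableSet_Ioc).2 (ae_of_all _ fun x hx => ?_)
        rw [Real.norm_eq_abs, abs_mul]
        exact mul_le_mul_of_nonneg_right
          (abs_deriv_fejer_le_mid n hn1 hη0 hx.1.le hx.2) (abs_nonneg _)
      · exact ((hψabs.mono_set hsub2).const_mul Rη)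
    rw [intervalIntegral.integral_const_mul, abs_mul, abs_of_pos hRηpos, Real.norm_eq_abs] at key
    refine key.trans ?_
    apply mul_le_mul_of_nonneg_left ?_ hRηpos.le
    have hnn1 : 0 ≤ ∫ x in (0:ℝ)..η, |ψ (t - x)| :=
      intervalIntegral.integral_nonneg hord1 fun x _ => abs_nonneg _
    have hnn3 : 0 ≤ ∫ x in (2*π - η)..(2*π), |ψ (t - x)| :=
      intervalIntegral.integral_nonneg hord3 fun x _ => abs_nonneg _
    have hsplitabs : (∫ x in (0:ℝ)..(2*π), |ψ (t - x)|)
        = (∫ x in (0:ℝ)..η, |ψ (t - x)|) + (∫ x in η..(2*π - η), |ψ (t - x)|)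
          + (∫ x in (2*π - η)..(2*π), |ψ (t - x)|) := by
      have e1 := intervalIntegral.integral_add_adjacent_intervals (hψabs.mono_set hsub1)
        ((hψabs.mono_set hsub2).trans (hψabs.mono_set hsub3))
      have e2 := intervalIntegral.integral_add_adjacent_intervals (hψabs.mono_set hsub2)
        (hψabs.mono_set hsub3)
      linarith
    have h5 : abs (∫ x in η..(2*π - η), |ψ (t - x)|) = ∫ x in η..(2*π - η), |ψ (t - x)| :=
      abs_of_nonneg (intervalIntegral.integral_nonneg hord2 fun x _ => abs_nonneg _)
    rw [h5]
    calc (∫ x in η..(2*π - η), |ψ (t - x)|) ≤ ∫ x in (0:ℝ)..(2*π), |ψ (t - x)| := by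
          rw [hsplitabs]; linarith
      _ = Mψ := htrans
  -- assemble
  rw [Real.dist_eq, zero_sub, abs_neg]
  set I := ∫ x in (0:ℝ)..(2*π), deriv (fejer n) x * ψ (t - x) with hI
  have hIeq : I = (∫ x in (0:ℝ)..η, deriv (fejer n) x * (ψ (t - x) - ψ t))
      + (∫ x in η..(2*π - η), deriv (fejer n) x * ψ (t - x))
      + (∫ x in (2*π - η)..(2*π), deriv (fejer n) x * (ψ (t - x) - ψ t))
      + ((∫ x in (0:ℝ)..η, deriv (fejer n) x)
          + (∫ x in (2*π - η)..(2*π), deriv (fejer n) x)) * ψ t := by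
    rw [hsplit, hP1eq, hP3eq]
    ring
  rw [hzero, zero_mul, add_zero] at hIeq
  have hItot : |I| ≤ ε' * (C₀ * n) + Rη * Mψ + ε' * (C₀ * n) := by
    rw [hIeq]
    exact (abs_add_three _ _ _).trans (add_le_add (add_le_add hP1 hP2) hP3)
  have habs : |(1 / (n:ℝ)) * ((1 / (2 * π)) * I)| = (1/(n:ℝ)) * ((1/(2*π)) * |I|) := by
    rw [abs_mul, abs_mul, abs_of_pos (by positivity : (0:ℝ) < 1/(n:ℝ)),
      abs_of_pos (by positivity : (0:ℝ) < 1/(2*π))]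
  rw [habs]
  have step1 : (1/(n:ℝ)) * ((1/(2*π)) * |I|)
      ≤ (1/(n:ℝ)) * ((1/(2*π)) * (2 * (ε' * (C₀ * n)) + Rη * Mψ)) := by
    apply mul_le_mul_of_nonneg_left (mul_le_mul_of_nonneg_left ?_ (by positivity))
      (by positivity)
    linarith
  have step2 : (1/(n:ℝ)) * ((1/(2*π)) * (2 * (ε' * (C₀ * n)) + Rη * Mψ))
      = ε/4 + (Rη * Mψ / (2*π)) / n := by
    rw [hε'def]
    field_simp
  have step3 : (Rη * Mψ / (2*π)) / n < ε/2 := hmid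
  calc (1/(n:ℝ)) * ((1/(2*π)) * |I|) ≤ _ := step1
    _ = ε/4 + (Rη * Mψ / (2*π)) / n := step2
    _ < ε/4 + ε/2 := by linarith
    _ < ε := by linarith
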